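/- Let p be a prime and ω = e^{2πi/p}. Let W be a linear subspace of 𝔽_p^n of codimension d, let y ∈ W^⊥, and let φ : W → 𝔽_p be a linear function. Define g : 𝔽_p^n → ℂ by g(x) = ω^{φ(x−y)} when x ∈ y + W and g(x) = 0 otherwise. Then ‖g‖_{U^2}^* = p^{−d/4}. -/

import Mathlib

open scoped BigOperators

instance instNeZeroOfFactPrime (p : ℕ) [hp : Fact p.Prime] : NeZero p :=
  ⟨hp.out.ne_zero⟩

/-- The vector space `𝔽_p^n`. -/
abbrev Vec (p n : ℕ) := Fin n → ZMod p

/-- `ω^t` where `ω = e^{2πi/p}`. -/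
noncomputable def omg (p : ℕ) (t : ZMod p) : ℂ :=
  Complex.exp (2 * Real.pi * Complex.I * (t.val : ℂ) / p)

/-- Average of a complex-valued function over a finite type. -/
noncomputable def avgC {α : Type*} [Fintype α] (f : α → ℂ) : ℂ :=
  (∑ x, f x) / (Fintype.card α : ℂ)

/-- Average of a real-valued function over a finite type. -/
noncomputable def avgR {α : Type*} [Fintype α] (f : α → ℝ) : ℝ :=
  (∑ x, f x) / (Fintype.card α : ℝ)

/-- The Gowers `U²` norm. -/
noncomputable def U2 {p n : ℕ} [NeZero p] (f : Vec p n → ℂ) : ℝ :=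
  ‖avgC (fun t : Vec p n × Vec p n × Vec p n =>
    f t.1 * star (f (t.1 + t.2.1)) * star (f (t.1 + t.2.2)) *
      f (t.1 + t.2.1 + t.2.2))‖ ^ ((1 : ℝ) / 4)

/-- The Gowers `U³` norm. -/
noncomputable def U3 {p n : ℕ} [NeZero p] (f : Vec p n → ℂ) : ℝ :=
  ‖avgC (fun t : Vec p n × Vec p n × Vec p n × Vec p n =>
    f t.1 * star (f (t.1 + t.2.1)) * star (f (t.1 + t.2.2.1)) *
      f (t.1 + t.2.1 + t.2.2.1) * star (f (t.1 + t.2.2.2)) *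
      f (t.1 + t.2.1 + t.2.2.2) * f (t.1 + t.2.2.1 + t.2.2.2) *
      star (f (t.1 + t.2.1 + t.2.2.1 + t.2.2.2)))‖ ^ ((1 : ℝ) / 8)

/-- `L¹` norm (with respect to the uniform probability measure). -/
noncomputable def L1 {p n : ℕ} [NeZero p] (f : Vec p n → ℂ) : ℝ :=
  avgR (fun x => ‖f x‖)

/-- `L²` norm (with respect to the uniform probability measure). -/
noncomputable def L2 {p n : ℕ} [NeZero p] (f : Vec p n → ℂ) : ℝ :=
  Real.sqrt (avgR (fun x => ‖f x‖ ^ 2))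

/-- `L∞` norm. -/
noncomputable def Linf {p n : ℕ} [NeZero p] (f : Vec p n → ℂ) : ℝ :=
  ⨆ x, ‖f x‖

/-- Normalized inner product `⟨f,g⟩ = 𝔼_x f(x) conj (g x)`. -/
noncomputable def inprod {p n : ℕ} [NeZero p] (f g : Vec p n → ℂ) : ℂ :=
  avgC (fun x => f x * star (g x))

/-- The dual of the `U²` norm. -/
noncomputable def U2dual {p n : ℕ} [NeZero p] (g : Vec p n → ℂ) : ℝ :=
  sSup {r : ℝ | ∃ f : Vec p n → ℂ, U2 f ≤ 1 ∧ r = ‖inprod f g‖}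

/-- The elements of a submodule of `𝔽_p^n` as a `Finset`. -/
noncomputable def subFinset {p n : ℕ} [NeZero p] (V : Submodule (ZMod p) (Vec p n)) :
    Finset (Vec p n) :=
  letI := Classical.decPred (fun v => v ∈ (V : Set (Vec p n)))
  Finset.univ.filter (fun v => v ∈ (V : Set (Vec p n)))

/-- Convolution `f * μ_V`, i.e. the average of `f` over the coset `x + V`. -/
noncomputable def convMu {p n : ℕ} [NeZero p] (f : Vec p n → ℂ)
    (V : Submodule (ZMod p) (Vec p n)) (x : Vec p n) : ℂ :=
  (∑ v ∈ subFinset V, f (x + v)) / ((subFinset V).card : ℂ)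

/-- The associated symmetric form `β(u,v) = q(u+v) - q(u) - q(v)`. -/
def qbeta {p n : ℕ} (q : Vec p n → ZMod p) (u v : Vec p n) : ZMod p :=
  q (u + v) - q u - q v

/-- `q` is a quadratic form on the subspace `V`: `q 0 = 0` and the associated
form `β` is (bi-)additive on `V`. -/
def IsQuadFormOn {p n : ℕ} (V : Submodule (ZMod p) (Vec p n))
    (q : Vec p n → ZMod p) : Prop :=
  q 0 = 0 ∧ ∀ u ∈ V, ∀ v ∈ V, ∀ w ∈ V, qbeta q u (v + w) = qbeta q u v + qbeta q u w

/-- The radical `{v ∈ V : β(u,v) = 0 for all u ∈ V}` of the form associated to `q`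
(as the span of that set, which equals the set itself when `q` is quadratic). -/
noncomputable def qRadical {p n : ℕ} (V : Submodule (ZMod p) (Vec p n))
    (q : Vec p n → ZMod p) : Submodule (ZMod p) (Vec p n) :=
  Submodule.span (ZMod p) {v | v ∈ V ∧ ∀ u ∈ V, qbeta q u v = 0}

/-- The rank of the quadratic form `q` on `V`: the codimension in `V` of the radical. -/
noncomputable def qRank {p n : ℕ} (V : Submodule (ZMod p) (Vec p n))
    (q : Vec p n → ZMod p) : ℕ :=
  Module.finrank (ZMod p) V - Module.finrank (ZMod p) (qRadical V q)

/-- `Q` is a quadratic average with base `(V, q)`: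
`Q(x) = 𝔼_{y ∈ x+V} ω^{q(x-y) + φ_y(x-y)}` with each `φ_y` linear on `V`.
(Parametrizing `y = x - v` with `v ∈ V`, this reads `Q(x) = 𝔼_{v ∈ V} ω^{q(v) + φ_{x-v}(v)}`.) -/
def IsQuadAvgWith {p n : ℕ} [NeZero p] (V : Submodule (ZMod p) (Vec p n))
    (q : Vec p n → ZMod p) (Q : Vec p n → ℂ) : Prop :=
  IsQuadFormOn V q ∧
  ∃ φ : Vec p n → Vec p n → ZMod p,
    (∀ y, ∀ u ∈ V, ∀ v ∈ V, φ y (u + v) = φ y u + φ y v) ∧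
    ∀ x, Q x = (∑ v ∈ subFinset V, omg p (q v + φ (x - v) v)) / ((subFinset V).card : ℂ)

/-- The radical of a bilinear form `β` restricted to the subspace `W`. -/
noncomputable def bRadical {p n : ℕ} (W : Submodule (ZMod p) (Vec p n))
    (β : Vec p n →ₗ[ZMod p] Vec p n →ₗ[ZMod p] ZMod p) :
    Submodule (ZMod p) (Vec p n) :=
  Submodule.span (ZMod p) {y | y ∈ W ∧ ∀ x ∈ W, β x y = 0}

/-- The rank of the bilinear form `β` restricted to the subspace `W`. -/
noncomputable def bRankOn {p n : ℕ} (W : Submodule (ZMod p) (Vec p n))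
    (β : Vec p n →ₗ[ZMod p] Vec p n →ₗ[ZMod p] ZMod p) : ℕ :=
  Module.finrank (ZMod p) W - Module.finrank (ZMod p) (bRadical W β)


/-! ### Auxiliary machinery for stmt8 -/

section Stmt8Aux

set_option maxHeartbeats 1000000
set_option linter.unusedSectionVars false

open scoped Classical

/-- the dot product pairing -/
def stmt8dot {p n : ℕ} (ξ x : Vec p n) : ZMod p := ∑ j, ξ j * x j

local notation "dot" => stmt8dot

lemma dot_comm {p n : ℕ} (ξ x : Vec p n) : dot ξ x = dot x ξ := by
  unfold stmt8dot; exact Finset.sum_congr rfl fun j _ => mul_comm _ _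

lemma dot_add_right {p n : ℕ} (ξ x u : Vec p n) : dot ξ (x + u) = dot ξ x + dot ξ u := by
  unfold stmt8dot
  rw [← Finset.sum_add_distrib]
  exact Finset.sum_congr rfl fun j _ => by simp [mul_add]

lemma dot_neg_right {p n : ℕ} (ξ x : Vec p n) : dot ξ (-x) = - dot ξ x := by
  unfold stmt8dot
  rw [← Finset.sum_neg_distrib]
  exact Finset.sum_congr rfl fun j _ => by simp

lemma dot_sub_right {p n : ℕ} (ξ x u : Vec p n) : dot ξ (x - u) = dot ξ x - dot ξ u := by
  rw [sub_eq_add_neg, dot_add_right, dot_neg_right, sub_eq_add_neg]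

lemma dot_neg_left {p n : ℕ} (ξ x : Vec p n) : dot (-ξ) x = - dot ξ x := by
  rw [dot_comm, dot_neg_right, dot_comm]

lemma dot_single {p n : ℕ} (ξ : Vec p n) (j : Fin n) : dot ξ (Pi.single j 1) = ξ j := by
  unfold stmt8dot
  rw [Finset.sum_eq_single j]
  · simp
  · intro b _ hb; simp [Pi.single_eq_of_ne hb]
  · simp

lemma dot_smul_right {p n : ℕ} (ξ : Vec p n) (c : ZMod p) (x : Vec p n) :
    dot ξ (c • x) = c * dot ξ x := by
  unfold stmt8dot
  rw [Finset.mul_sum]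
  refine Finset.sum_congr rfl fun j _ => ?_
  simp [Pi.smul_apply, smul_eq_mul]; ring

lemma dot_smul_left {p n : ℕ} (c : ZMod p) (ξ x : Vec p n) :
    dot (c • ξ) x = c * dot ξ x := by
  rw [dot_comm, dot_smul_right, dot_comm]

lemma dot_add_left {p n : ℕ} (ξ₁ ξ₂ x : Vec p n) : dot (ξ₁ + ξ₂) x = dot ξ₁ x + dot ξ₂ x := by
  rw [dot_comm, dot_add_right, dot_comm x ξ₁, dot_comm x ξ₂]

/-- unnormalized Fourier coefficient -/
noncomputable def stmt8T {p n : ℕ} [NeZero p] (f : Vec p n → ℂ) (ξ : Vec p n) : ℂ :=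
  ∑ x, f x * omg p (dot ξ x)

local notation "Tf" => stmt8T

noncomputable def stmt8corr {p n : ℕ} [NeZero p] (f : Vec p n → ℂ) (a : Vec p n) : ℂ :=
  ∑ x, f x * star (f (x + a))

local notation "corr" => stmt8corr

/-- The restriction-of-dot linear map. -/
noncomputable def stmt8Phi {p n : ℕ} (W : Submodule (ZMod p) (Vec p n)) :
    Vec p n →ₗ[ZMod p] (↥W →ₗ[ZMod p] ZMod p) where
  toFun ξ :=
    { toFun := fun w => dot ξ w.val
      map_add' := fun a b => by simp [dot_add_right]
      map_smul' := fun c a => by simp [dot_smul_right] }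
  map_add' a b := by ext w; simp [dot_add_left]
  map_smul' c a := by ext w; simp [dot_smul_left]

local notation "Phi" => stmt8Phi

lemma Phi_apply {p n : ℕ} (W : Submodule (ZMod p) (Vec p n)) (ξ : Vec p n) (w : ↥W) :
    Phi W ξ w = dot ξ w.val := rfl

variable {p : ℕ} [hp : Fact p.Prime] {n : ℕ}

lemma omg_eq_pow (t : ZMod p) :
    omg p t = Complex.exp (2 * Real.pi * Complex.I / p) ^ t.val := by
  rw [omg, ← Complex.exp_nat_mul]
  congr 1
  ring

lemma stmt8_prim : IsPrimitiveRoot (Complex.exp (2 * Real.pi * Complex.I / p)) p :=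
  Complex.isPrimitiveRoot_exp p hp.out.ne_zero

lemma omg_add (a b : ZMod p) : omg p (a + b) = omg p a * omg p b := by
  rw [omg_eq_pow, omg_eq_pow, omg_eq_pow, ← pow_add]
  obtain ⟨k, hk⟩ : ∃ k : ℕ, a.val + b.val = (a + b).val + k * p := by
    refine ⟨(a.val + b.val) / p, ?_⟩
    rw [ZMod.val_add]
    exact (Nat.mod_add_div' _ _).symm
  rw [hk, pow_add, mul_comm k p, pow_mul, (stmt8_prim (p := p)).pow_eq_one, one_pow, mul_one]

lemma omg_zero : omg p 0 = 1 := by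
  rw [omg_eq_pow]
  simp [ZMod.val_zero]

lemma norm_omg (t : ZMod p) : ‖omg p t‖ = 1 := by
  rw [omg_eq_pow, norm_pow, Complex.norm_exp]
  have : (2 * (Real.pi : ℂ) * Complex.I / p).re = 0 := by
    simp [Complex.div_re]
  rw [this, Real.exp_zero, one_pow]

lemma omg_ne_zero (t : ZMod p) : omg p t ≠ 0 := by
  intro h
  have := norm_omg (p := p) t
  rw [h] at this
  simp at this

lemma star_omg (t : ZMod p) : star (omg p t) = omg p (-t) := by
  have h1 : omg p (-t) * omg p t = 1 := by rw [← omg_add, neg_add_cancel, omg_zero]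
  have h2 : star (omg p t) * omg p t = 1 := by
    rw [Complex.star_def, mul_comm, Complex.mul_conj]
    have : Complex.normSq (omg p t) = 1 := by
      rw [Complex.normSq_eq_norm_sq, norm_omg]; norm_num
    rw [this]; norm_num
  have := h2.trans h1.symm
  exact mul_right_cancel₀ (omg_ne_zero t) this

lemma omg_ne_one {t : ZMod p} (ht : t ≠ 0) : omg p t ≠ 1 := by
  rw [omg_eq_pow]
  intro h
  rw [(stmt8_prim (p := p)).pow_eq_one_iff_dvd t.val] at h
  have hv : t.val < p := ZMod.val_lt t
  have hv0 : t.val ≠ 0 := by simpa [ZMod.val_eq_zero] using ht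
  exact hv0 (Nat.eq_zero_of_dvd_of_lt h hv)

lemma sum_omg_shift {α : Type*} [Fintype α] [AddCommGroup α] (ψ : α → ZMod p)
    (hadd : ∀ a b, ψ (a + b) = ψ a + ψ b) (a0 : α) (h : ψ a0 ≠ 0) :
    ∑ a, omg p (ψ a) = 0 := by
  have key : ∑ a, omg p (ψ a) = omg p (ψ a0) * ∑ a, omg p (ψ a) := by
    rw [Finset.mul_sum]
    rw [← Equiv.sum_comp (Equiv.addLeft a0) (fun a => omg p (ψ a))]
    apply Finset.sum_congr rfl
    intro a _
    simp only [Equiv.coe_addLeft]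
    rw [hadd, omg_add]
  have : (omg p (ψ a0) - 1) * ∑ a, omg p (ψ a) = 0 := by
    rw [sub_mul, one_mul, ← key, sub_self]
  rcases mul_eq_zero.1 this with h' | h'
  · exact absurd (sub_eq_zero.1 h') (omg_ne_one h)
  · exact h'

lemma card_vec : Fintype.card (Vec p n) = p ^ n := by
  simp [ZMod.card]

lemma sum_omg_dot (v : Vec p n) :
    ∑ ξ : Vec p n, omg p (dot ξ v) = if v = 0 then ((p : ℂ) ^ n) else 0 := by
  split_ifs with h
  · subst h
    have : ∀ ξ : Vec p n, dot ξ (0 : Vec p n) = 0 := by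
      intro ξ; unfold stmt8dot; simp
    simp only [this, omg_zero, Finset.sum_const, Finset.card_univ, card_vec,
      nsmul_eq_mul, mul_one]
    push_cast; ring
  · obtain ⟨j, hj⟩ : ∃ j, v j ≠ 0 := by
      by_contra hc
      push_neg at hc
      exact h (funext hc)
    refine sum_omg_shift (fun ξ => dot ξ v) (fun a b => ?_) (Pi.single j 1) ?_
    · show dot (a + b) v = dot a v + dot b v
      rw [dot_comm, dot_add_right, dot_comm v a, dot_comm v b]
    · show dot (Pi.single j 1) v ≠ 0
      rw [dot_comm, dot_single]; exact hj

lemma parseval (f g : Vec p n → ℂ) :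
    ∑ ξ : Vec p n, Tf f ξ * star (Tf g ξ) = (p : ℂ) ^ n * ∑ x, f x * star (g x) := by
  have expand : ∀ ξ : Vec p n, Tf f ξ * star (Tf g ξ)
      = ∑ x, ∑ u, f x * star (g u) * omg p (dot ξ (x - u)) := by
    intro ξ
    rw [stmt8T, stmt8T, star_sum, Finset.sum_mul_sum]
    refine Finset.sum_congr rfl fun x _ => Finset.sum_congr rfl fun u _ => ?_
    rw [star_mul', star_omg, dot_sub_right, sub_eq_add_neg, omg_add]
    ring
  simp only [expand]
  rw [Finset.sum_comm]
  have hx : ∀ x : Vec p n,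
      ∑ ξ : Vec p n, ∑ u : Vec p n, f x * star (g u) * omg p (dot ξ (x - u))
        = (p:ℂ)^n * (f x * star (g x)) := by
    intro x
    rw [Finset.sum_comm]
    have h2 : ∀ u : Vec p n, ∑ ξ : Vec p n, f x * star (g u) * omg p (dot ξ (x - u))
        = f x * star (g u) * (if x - u = 0 then ((p:ℂ)^n) else 0) := by
      intro u
      rw [← Finset.mul_sum, sum_omg_dot]
    simp only [h2]
    rw [Finset.sum_eq_single x]
    · simp [mul_comm]
    · intro u _ hu
      rw [if_neg (by simpa [sub_eq_zero] using fun hh => hu hh.symm), mul_zero]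
    · simp
  refine (Finset.sum_congr rfl fun x _ => hx x).trans ?_
  rw [Finset.mul_sum]

lemma quad_sum_eq_corr (f : Vec p n → ℂ) :
    (∑ t : Vec p n × Vec p n × Vec p n,
      f t.1 * star (f (t.1 + t.2.1)) * star (f (t.1 + t.2.2)) * f (t.1 + t.2.1 + t.2.2))
    = ∑ a, corr f a * star (corr f a) := by
  rw [Fintype.sum_prod_type]
  simp only [Fintype.sum_prod_type]
  rw [Finset.sum_comm]
  refine Finset.sum_congr rfl fun a _ => ?_
  have inner : ∀ x : Vec p n,
      ∑ b : Vec p n, f x * star (f (x + a)) * star (f (x + b)) * f (x + a + b)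
        = (f x * star (f (x + a))) * ∑ u : Vec p n, star (f u) * f (u + a) := by
    intro x
    rw [Finset.mul_sum]
    rw [← Equiv.sum_comp (Equiv.addLeft x)
      (fun u => f x * star (f (x + a)) * (star (f u) * f (u + a)))]
    refine Finset.sum_congr rfl fun b _ => ?_
    simp only [Equiv.coe_addLeft]
    have : x + a + b = x + b + a := by ring
    rw [this]; ring
  simp only [inner]
  rw [← Finset.sum_mul]
  congr 1
  rw [stmt8corr, star_sum]
  refine Finset.sum_congr rfl fun u _ => ?_
  rw [star_mul', star_star]

lemma Tf_corr (f : Vec p n → ℂ) (ξ : Vec p n) :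
    Tf (corr f) ξ = Tf f (-ξ) * star (Tf f (-ξ)) := by
  rw [stmt8T]
  simp only [stmt8corr, Finset.sum_mul]
  rw [Finset.sum_comm]
  have inner : ∀ x : Vec p n,
      ∑ a : Vec p n, f x * star (f (x + a)) * omg p (dot ξ a)
        = ∑ u : Vec p n, (f x * omg p (dot (-ξ) x)) * (star (f u) * omg p (dot ξ u)) := by
    intro x
    rw [← Equiv.sum_comp (Equiv.addLeft x)
      (fun u => (f x * omg p (dot (-ξ) x)) * (star (f u) * omg p (dot ξ u)))]
    refine Finset.sum_congr rfl fun a _ => ?_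
    simp only [Equiv.coe_addLeft]
    rw [dot_neg_left, dot_add_right]
    have : omg p (dot ξ x + dot ξ a) = omg p (dot ξ x) * omg p (dot ξ a) := omg_add _ _
    rw [this]
    have h2 : omg p (-dot ξ x) * omg p (dot ξ x) = 1 := by
      rw [← omg_add, neg_add_cancel, omg_zero]
    calc f x * star (f (x + a)) * omg p (dot ξ a)
        = f x * (omg p (-dot ξ x) * omg p (dot ξ x)) * star (f (x+a)) * omg p (dot ξ a) := by
          rw [h2]; ring
      _ = f x * omg p (-dot ξ x) * (star (f (x + a)) * (omg p (dot ξ x) * omg p (dot ξ a))) := by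
          ring
  simp only [inner]
  rw [← Finset.sum_mul_sum]
  simp only [stmt8T, star_sum]
  congr 1
  refine Finset.sum_congr rfl fun u _ => ?_
  rw [star_mul', star_omg, dot_neg_left, neg_neg, mul_comm]

lemma U2_fourier (f : Vec p n → ℂ) :
    (p : ℂ) ^ n * (∑ t : Vec p n × Vec p n × Vec p n,
      f t.1 * star (f (t.1 + t.2.1)) * star (f (t.1 + t.2.2)) * f (t.1 + t.2.1 + t.2.2))
    = ∑ ξ : Vec p n, (Tf f ξ * star (Tf f ξ)) ^ 2 := by
  rw [quad_sum_eq_corr, ← parseval (corr f) (corr f)]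
  rw [← Equiv.sum_comp (Equiv.neg (Vec p n)) (fun ξ => (Tf f ξ * star (Tf f ξ))^2)]
  refine Finset.sum_congr rfl fun ξ _ => ?_
  rw [Tf_corr]
  simp only [Equiv.neg_apply]
  rw [star_mul', star_star]
  ring

lemma mem_subFinset {W : Submodule (ZMod p) (Vec p n)} {v : Vec p n} :
    v ∈ subFinset W ↔ v ∈ W := by
  simp [subFinset]

lemma exists_dot (ψ : Vec p n →ₗ[ZMod p] ZMod p) : ∃ ξ : Vec p n, ∀ x, dot ξ x = ψ x := by
  refine ⟨fun j => ψ (Pi.single j 1), fun x => ?_⟩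
  have hx : x = ∑ j, x j • (Pi.single j 1 : Vec p n) := by
    ext k
    rw [Finset.sum_apply]
    rw [Finset.sum_eq_single k]
    · simp
    · intro b _ hb; simp [Pi.single_eq_of_ne (Ne.symm hb)]
    · simp
  conv_rhs => rw [hx]
  rw [map_sum]
  unfold stmt8dot
  refine Finset.sum_congr rfl fun j _ => ?_
  rw [map_smul, smul_eq_mul, mul_comm]

lemma Phi_surj (W : Submodule (ZMod p) (Vec p n)) : Function.Surjective (Phi W) := by
  intro ψ
  obtain ⟨ψ', hψ'⟩ := LinearMap.exists_extend ψ
  obtain ⟨ξ, hξ⟩ := exists_dot ψ'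
  refine ⟨ξ, ?_⟩
  ext w
  have := congrArg (fun f => f w) hψ'
  simp only [LinearMap.comp_apply, Submodule.subtype_apply] at this
  simpa [stmt8Phi, hξ] using this

lemma finrank_vec : Module.finrank (ZMod p) (Vec p n) = n := Module.finrank_fin_fun _

lemma card_fiber (W : Submodule (ZMod p) (Vec p n)) (ψ0 : ↥W →ₗ[ZMod p] ZMod p) :
    (Finset.univ.filter (fun ξ : Vec p n => Phi W ξ = ψ0)).card
      = p ^ (n - Module.finrank (ZMod p) W) := by
  obtain ⟨ξ0, hξ0⟩ := Phi_surj W ψ0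
  have hbij : (Finset.univ.filter (fun ξ : Vec p n => Phi W ξ = ψ0)).card
      = (Finset.univ.filter (fun ξ : Vec p n => Phi W ξ = 0)).card := by
    apply Finset.card_bij' (fun ξ _ => ξ - ξ0) (fun ξ _ => ξ + ξ0)
    · intro a ha
      simp only [Finset.mem_filter, Finset.mem_univ, true_and] at ha ⊢
      rw [map_sub, ha, hξ0, sub_self]
    · intro a ha
      simp only [Finset.mem_filter, Finset.mem_univ, true_and] at ha ⊢
      rw [map_add, ha, hξ0, zero_add]
    · intro a _; simp
    · intro a _; simp
  rw [hbij]
  have h1 : (Finset.univ.filter (fun ξ : Vec p n => Phi W ξ = 0)).card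
      = Fintype.card ↥(LinearMap.ker (Phi W)) := by
    rw [← Fintype.card_subtype]
    exact Fintype.card_congr (Equiv.subtypeEquivRight fun ξ => (LinearMap.mem_ker).symm)
  rw [h1]
  have h2 : Fintype.card ↥(LinearMap.ker (Phi W))
      = p ^ Module.finrank (ZMod p) ↥(LinearMap.ker (Phi W)) := by
    have := Module.card_eq_pow_finrank (K := ZMod p) (V := ↥(LinearMap.ker (Phi W)))
    rwa [ZMod.card] at this
  rw [h2]
  congr 1
  have hrank := LinearMap.finrank_range_add_finrank_ker (Phi W)
  rw [LinearMap.range_eq_top.2 (Phi_surj W), finrank_top, finrank_vec] at hrank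
  have hdual : Module.finrank (ZMod p) (↥W →ₗ[ZMod p] ZMod p)
      = Module.finrank (ZMod p) ↥W := Subspace.dual_finrank_eq
  rw [hdual] at hrank
  have hWle : Module.finrank (ZMod p) ↥W ≤ n := by
    have := Submodule.finrank_le W
    rwa [finrank_vec] at this
  omega

lemma card_subFinset (W : Submodule (ZMod p) (Vec p n)) :
    (subFinset W).card = p ^ Module.finrank (ZMod p) ↥W := by
  have h1 : (subFinset W).card = Fintype.card ↥W :=
    (Fintype.card_of_subtype (subFinset W) fun _ => mem_subFinset).symm
  rw [h1]
  have := Module.card_eq_pow_finrank (K := ZMod p) (V := ↥W)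
  rwa [ZMod.card] at this

lemma sum_subFinset_omg (W : Submodule (ZMod p) (Vec p n)) (ψ : Vec p n → ZMod p)
    (hadd : ∀ a b, ψ (a + b) = ψ a + ψ b) :
    ∑ v ∈ subFinset W, omg p (ψ v)
      = if (∀ v ∈ W, ψ v = 0) then ((subFinset W).card : ℂ) else 0 := by
  split_ifs with h
  · rw [Finset.sum_congr rfl (fun v hv => by rw [h v (mem_subFinset.1 hv), omg_zero])]
    simp
  · push_neg at h
    obtain ⟨v0, hv0, hne⟩ := h
    have key : ∑ v ∈ subFinset W, omg p (ψ v)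
        = omg p (ψ v0) * ∑ v ∈ subFinset W, omg p (ψ v) := by
      rw [Finset.mul_sum]
      apply Finset.sum_nbij' (fun v => v - v0) (fun v => v0 + v)
      · intro a ha; exact mem_subFinset.2 (W.sub_mem (mem_subFinset.1 ha) hv0)
      · intro a ha; exact mem_subFinset.2 (W.add_mem hv0 (mem_subFinset.1 ha))
      · intro a _; simp
      · intro a _; simp
      · intro a _
        rw [← omg_add, ← hadd]
        congr 2
        ring
    have h0 : (omg p (ψ v0) - 1) * ∑ v ∈ subFinset W, omg p (ψ v) = 0 := by
      rw [sub_mul, one_mul, ← key, sub_self]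
    rcases mul_eq_zero.1 h0 with h' | h'
    · exact absurd (sub_eq_zero.1 h') (omg_ne_one hne)
    · exact h'

section TfG

variable (W : Submodule (ZMod p) (Vec p n)) (y : Vec p n)
  (φ : ↥W →ₗ[ZMod p] ZMod p) (g : Vec p n → ℂ)
  (φe : Vec p n →ₗ[ZMod p] ZMod p) (hφe : ∀ w : ↥W, φe w.val = φ w)
  (hg : ∀ x, g x = if h : x - y ∈ W then omg p (φ ⟨x - y, h⟩) else 0)

include hφe hg

lemma Tf_g (ξ : Vec p n) :
    Tf g ξ = omg p (dot ξ y) *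
      (if Phi W ξ = -φ then ((subFinset W).card : ℂ) else 0) := by
  rw [stmt8T]
  rw [← Equiv.sum_comp (Equiv.addLeft y) (fun x => g x * omg p (dot ξ x))]
  have step1 : ∀ v : Vec p n,
      g ((Equiv.addLeft y) v) * omg p (dot ξ ((Equiv.addLeft y) v))
        = omg p (dot ξ y) * (if v ∈ W then omg p (φe v + dot ξ v) else 0) := by
    intro v
    simp only [Equiv.coe_addLeft]
    rw [hg]
    have hyv : y + v - y = v := by ring
    simp only [hyv]
    split_ifs with h1
    · rw [← hφe ⟨v, h1⟩, dot_add_right, omg_add, omg_add]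
      ring
    · simp
  rw [Finset.sum_congr rfl (fun v _ => step1 v), ← Finset.mul_sum]
  congr 1
  have step2 : ∑ v : Vec p n, (if v ∈ W then omg p (φe v + dot ξ v) else 0)
      = ∑ v ∈ subFinset W, omg p (φe v + dot ξ v) := by
    rw [← Finset.sum_filter]
    apply Finset.sum_congr _ (fun _ _ => rfl)
    ext v
    simp [mem_subFinset]
  rw [step2, sum_subFinset_omg W _ (fun a b => by rw [map_add, dot_add_right]; ring)]
  congr 1
  apply propext
  constructor
  · intro h
    ext w
    have := h w.val w.2
    rw [Phi_apply, LinearMap.neg_apply, ← hφe w]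
    linear_combination this
  · intro h v hv
    have := congrArg (fun f => f ⟨v, hv⟩) h
    simp only [Phi_apply, LinearMap.neg_apply] at this
    rw [← hφe ⟨v, hv⟩] at this
    linear_combination this

lemma Tg_mul_star (ξ : Vec p n) :
    Tf g ξ * star (Tf g ξ)
      = if Phi W ξ = -φ then (((subFinset W).card : ℂ))^2 else 0 := by
  rw [Tf_g W y φ g φe hφe hg ξ]
  split_ifs with h
  · rw [star_mul', star_omg, star_natCast]
    have h1 : omg p (dot ξ y) * omg p (-dot ξ y) = 1 := by
      rw [← omg_add, add_neg_cancel, omg_zero]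
    calc omg p (dot ξ y) * ((subFinset W).card : ℂ) *
          (omg p (-dot ξ y) * ((subFinset W).card : ℂ))
        = (omg p (dot ξ y) * omg p (-dot ξ y)) * ((subFinset W).card : ℂ)^2 := by ring
      _ = ((subFinset W).card : ℂ)^2 := by rw [h1]; try rw [one_mul]
  · simp

lemma norm_Tg (ξ : Vec p n) :
    ‖Tf g ξ‖ = if Phi W ξ = -φ then (((subFinset W).card : ℝ)) else 0 := by
  rw [Tf_g W y φ g φe hφe hg ξ, norm_mul, norm_omg, one_mul]
  split_ifs
  · simp
  · simp

end TfG

lemma U2_eq (f : Vec p n → ℂ) :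
    U2 f = ((∑ ξ : Vec p n, ‖Tf f ξ‖ ^ 4) / (p : ℝ) ^ (4 * n)) ^ ((1 : ℝ) / 4) := by
  rw [U2]
  congr 1
  have hsum : ∑ ξ : Vec p n, (Tf f ξ * star (Tf f ξ)) ^ 2
      = ((∑ ξ : Vec p n, ‖Tf f ξ‖ ^ 4 : ℝ) : ℂ) := by
    push_cast
    refine Finset.sum_congr rfl fun ξ _ => ?_
    have : Tf f ξ * star (Tf f ξ) = ((‖Tf f ξ‖ ^ 2 : ℝ) : ℂ) := by
      rw [Complex.star_def, Complex.mul_conj, Complex.normSq_eq_norm_sq]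
      try push_cast
      try ring
    rw [this]
    push_cast; ring
  have hpn : ((p : ℂ) ^ n) ≠ 0 := by
    have : (p : ℂ) ≠ 0 := by exact_mod_cast Nat.cast_ne_zero.2 hp.out.ne_zero
    exact pow_ne_zero _ this
  have hquad := U2_fourier f
  rw [hsum] at hquad
  have havg : avgC (fun t : Vec p n × Vec p n × Vec p n =>
      f t.1 * star (f (t.1 + t.2.1)) * star (f (t.1 + t.2.2)) * f (t.1 + t.2.1 + t.2.2))
      = (((∑ ξ : Vec p n, ‖Tf f ξ‖ ^ 4) / (p : ℝ) ^ (4 * n) : ℝ) : ℂ) := by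
    rw [avgC]
    have hcard : (Fintype.card (Vec p n × Vec p n × Vec p n) : ℂ) = (p : ℂ) ^ (3 * n) := by
      rw [Fintype.card_prod, Fintype.card_prod, card_vec]
      push_cast
      ring
    have hpc : (p : ℂ) ≠ 0 := by exact_mod_cast Nat.cast_ne_zero.2 hp.out.ne_zero
    rw [hcard, div_eq_iff (pow_ne_zero _ hpc)]
    have h3 : (∑ t : Vec p n × Vec p n × Vec p n,
        f t.1 * star (f (t.1 + t.2.1)) * star (f (t.1 + t.2.2)) * f (t.1 + t.2.1 + t.2.2))
        = ((∑ ξ : Vec p n, ‖Tf f ξ‖ ^ 4 : ℝ) : ℂ) / (p:ℂ)^n := by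
      rw [eq_div_iff (pow_ne_zero _ hpc)]
      linear_combination hquad
    have h4 : ((p:ℂ))^(4*n) = (p:ℂ)^n * (p:ℂ)^(3*n) := by
      rw [← pow_add]; congr 1; omega
    rw [h3, Complex.ofReal_div, Complex.ofReal_pow, Complex.ofReal_natCast, h4, ← div_div,
      div_mul_cancel₀ _ (pow_ne_zero _ hpc)]
  rw [havg, Complex.norm_real, Real.norm_of_nonneg (by positivity)]

lemma inprod_eq (f g : Vec p n → ℂ) :
    inprod f g = (∑ ξ : Vec p n, Tf f ξ * star (Tf g ξ)) / (p : ℂ) ^ (2 * n) := by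
  rw [inprod, avgC, parseval, card_vec]
  have hpn : ((p:ℂ)) ≠ 0 := by exact_mod_cast Nat.cast_ne_zero.2 hp.out.ne_zero
  push_cast
  rw [two_mul, pow_add]
  field_simp

end Stmt8Aux

set_option maxHeartbeats 2000000

open scoped Classical in
/-- Lemma 4.4. If `W ≤ 𝔽_p^n` has codimension `d`, `y ∈ W^⊥`, `φ` is a
linear function on `W`, and `g = ω^{φ(x-y)}·1_{y+W}`, then `‖g‖_{U²}^* = p^{-d/4}`. -/
theorem stmt8 (p : ℕ) [Fact p.Prime] (n : ℕ)
    (W : Submodule (ZMod p) (Vec p n)) (d : ℕ)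
    (hd : n - Module.finrank (ZMod p) W = d)
    (y : Vec p n) (hy : ∀ x ∈ W, (∑ j, y j * x j) = 0)
    (φ : W →ₗ[ZMod p] ZMod p) (g : Vec p n → ℂ)
    (hg : ∀ x, g x = if h : x - y ∈ W then omg p (φ ⟨x - y, h⟩) else 0) :
    U2dual g = (p : ℝ) ^ (-(d : ℝ) / 4) := by
  classical
  obtain ⟨φe, hφe'⟩ := LinearMap.exists_extend φ
  have hφe : ∀ w : ↥W, φe w.val = φ w := by
    intro w
    have := congrArg (fun f => f w) hφe'
    simpa using this
  have hp0 : (0:ℝ) < p := by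
    have := (Fact.out : p.Prime).pos
    exact_mod_cast this
  set m := Module.finrank (ZMod p) ↥W with hm
  have hWle : m ≤ n := by
    have := Submodule.finrank_le W
    rwa [finrank_vec] at this
  have hmd : m + d = n := by omega
  set S : Finset (Vec p n) := Finset.univ.filter (fun ξ => stmt8Phi W ξ = -φ) with hS
  have hScard : (S.card : ℝ) = (p:ℝ)^d := by
    rw [hS, card_fiber W (-φ)]
    rw [← hm, hd]
    push_cast
    ring
  have hcW : ((subFinset W).card : ℝ) = (p:ℝ)^m := by
    rw [card_subFinset]
    push_cast
    ring
  have hcWC : ((subFinset W).card : ℂ) = (p:ℂ)^m := by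
    rw [card_subFinset]
    push_cast
    ring
  have hU2nn : ∀ f : Vec p n → ℂ, 0 ≤ U2 f := by
    intro f
    rw [U2_eq]
    positivity
  -- upper bound
  have hub : ∀ f : Vec p n → ℂ, ‖inprod f g‖ ≤ (p:ℝ)^(-(d:ℝ)/4) * U2 f := by
    intro f
    have hineq1 : ‖inprod f g‖ ≤ (p:ℝ)^m * (∑ ξ ∈ S, ‖stmt8T f ξ‖) / (p:ℝ)^(2*n) := by
      rw [inprod_eq, norm_div]
      have hden : ‖((p:ℂ))^(2*n)‖ = (p:ℝ)^(2*n) := by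
        rw [norm_pow, Complex.norm_natCast]
      rw [hden]
      apply div_le_div_of_nonneg_right ?_ (by positivity)
      calc ‖∑ ξ : Vec p n, stmt8T f ξ * star (stmt8T g ξ)‖
          ≤ ∑ ξ : Vec p n, ‖stmt8T f ξ * star (stmt8T g ξ)‖ := norm_sum_le _ _
        _ = ∑ ξ : Vec p n, ‖stmt8T f ξ‖ *
              (if stmt8Phi W ξ = -φ then ((p:ℝ)^m) else 0) := by
            refine Finset.sum_congr rfl fun ξ _ => ?_
            rw [norm_mul, norm_star, norm_Tg W y φ g φe hφe hg ξ, ← hcW]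
        _ = ∑ ξ ∈ S, ‖stmt8T f ξ‖ * (p:ℝ)^m := by
            rw [hS, Finset.sum_filter]
            simp only [mul_ite, mul_zero]
        _ = (p:ℝ)^m * ∑ ξ ∈ S, ‖stmt8T f ξ‖ := by
            rw [← Finset.sum_mul]; ring
    have hA4 : (∑ ξ ∈ S, ‖stmt8T f ξ‖)^4
        ≤ ((p:ℝ)^d)^3 * ∑ ξ : Vec p n, ‖stmt8T f ξ‖^4 := by
      have h1 := pow_sum_le_card_mul_sum_pow (s := S)
        (f := fun ξ => ‖stmt8T f ξ‖) (fun i _ => norm_nonneg _) 3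
      calc (∑ ξ ∈ S, ‖stmt8T f ξ‖)^4
          = (∑ ξ ∈ S, ‖stmt8T f ξ‖)^(3+1) := by norm_num
        _ ≤ (S.card:ℝ)^3 * ∑ ξ ∈ S, ‖stmt8T f ξ‖^(3+1) := h1
        _ ≤ ((p:ℝ)^d)^3 * ∑ ξ : Vec p n, ‖stmt8T f ξ‖^4 := by
            rw [hScard]
            have h2 : ∑ ξ ∈ S, ‖stmt8T f ξ‖^(3+1) ≤ ∑ ξ : Vec p n, ‖stmt8T f ξ‖^4 := by
              norm_num
              exact Finset.sum_le_sum_of_subset_of_nonneg (Finset.subset_univ S)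
                (fun i _ _ => by positivity)
            exact mul_le_mul_of_nonneg_left h2 (by positivity)
    have hc4 : ((p:ℝ)^(-(d:ℝ)/4))^4 = ((p:ℝ)^d)⁻¹ := by
      rw [← Real.rpow_natCast ((p:ℝ)^(-(d:ℝ)/4)) 4, ← Real.rpow_mul hp0.le]
      have : (-(d:ℝ)/4) * ((4:ℕ):ℝ) = -(d:ℝ) := by push_cast; ring
      rw [this, Real.rpow_neg hp0.le, Real.rpow_natCast]
    have hU4 : (U2 f)^4 = (∑ ξ : Vec p n, ‖stmt8T f ξ‖^4) / (p:ℝ)^(4*n) := by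
      rw [U2_eq, ← Real.rpow_natCast _ 4, ← Real.rpow_mul (by positivity)]
      norm_num
    have hgoal4 : ‖inprod f g‖^4 ≤ ((p:ℝ)^(-(d:ℝ)/4) * U2 f)^4 := by
      rw [mul_pow, hc4, hU4]
      have hkey : ((p:ℝ)^m)^4 * ((p:ℝ)^d)^3 * ((p:ℝ)^d * (p:ℝ)^(4*n)) = ((p:ℝ)^(2*n))^4 := by
        rw [← pow_mul, ← pow_mul, ← pow_mul, ← pow_add, ← pow_add, ← pow_add]
        congr 1
        omega
      calc ‖inprod f g‖^4
          ≤ ((p:ℝ)^m * (∑ ξ ∈ S, ‖stmt8T f ξ‖) / (p:ℝ)^(2*n))^4 :=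
            pow_le_pow_left₀ (norm_nonneg _) hineq1 4
        _ = ((p:ℝ)^m)^4 * (∑ ξ ∈ S, ‖stmt8T f ξ‖)^4 / ((p:ℝ)^(2*n))^4 := by
            rw [div_pow, mul_pow]
        _ ≤ ((p:ℝ)^m)^4 * (((p:ℝ)^d)^3 * ∑ ξ : Vec p n, ‖stmt8T f ξ‖^4)
              / ((p:ℝ)^(2*n))^4 := by
            gcongr
        _ = ((p:ℝ)^d)⁻¹ * ((∑ ξ : Vec p n, ‖stmt8T f ξ‖^4) / (p:ℝ)^(4*n)) := by
            rw [← hkey]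
            have hd0 : (0:ℝ) < (p:ℝ)^d := by positivity
            have hm0 : (0:ℝ) < (p:ℝ)^m := by positivity
            have h4n0 : (0:ℝ) < (p:ℝ)^(4*n) := by positivity
            field_simp
    exact le_of_pow_le_pow_left₀ (by norm_num)
      (mul_nonneg (Real.rpow_nonneg hp0.le _) (hU2nn f)) hgoal4
  -- the maximizer
  set cst : ℝ := (p:ℝ)^((3*(d:ℝ))/4) with hcstdef
  have hcst0 : 0 ≤ cst := Real.rpow_nonneg hp0.le _
  set f0 : Vec p n → ℂ := fun x => (cst:ℂ) * g x with hf0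
  have hTf0 : ∀ ξ, stmt8T f0 ξ = (cst:ℂ) * stmt8T g ξ := by
    intro ξ
    rw [stmt8T, stmt8T, Finset.mul_sum]
    exact Finset.sum_congr rfl fun x _ => by rw [hf0]; ring
  have hcst4 : cst^4 = (p:ℝ)^(3*d) := by
    rw [hcstdef, ← Real.rpow_natCast ((p:ℝ)^((3*(d:ℝ))/4)) 4, ← Real.rpow_mul hp0.le]
    have : (3*(d:ℝ)/4) * ((4:ℕ):ℝ) = ((3*d : ℕ):ℝ) := by push_cast; ring
    rw [this, Real.rpow_natCast]
  have hRf0 : ∑ ξ : Vec p n, ‖stmt8T f0 ξ‖^4 = (p:ℝ)^(4*n) := by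
    have hterm : ∀ ξ : Vec p n, ‖stmt8T f0 ξ‖^4
        = cst^4 * (if stmt8Phi W ξ = -φ then ((p:ℝ)^m)^4 else 0) := by
      intro ξ
      rw [hTf0, norm_mul, Complex.norm_real, Real.norm_of_nonneg hcst0,
        norm_Tg W y φ g φe hφe hg ξ, ← hcW, mul_pow]
      congr 1
      split_ifs
      · rfl
      · norm_num
    simp only [hterm]
    rw [← Finset.mul_sum, ← Finset.sum_filter, ← hS, Finset.sum_const, nsmul_eq_mul,
      hScard, hcst4]
    rw [← pow_mul, ← pow_add, ← pow_add]
    congr 1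
    omega
  have hU2f0 : U2 f0 = 1 := by
    rw [U2_eq, hRf0, div_self (by positivity), Real.one_rpow]
  have hip : ‖inprod f0 g‖ = (p:ℝ)^(-(d:ℝ)/4) := by
    rw [inprod_eq]
    have hnum : ∑ ξ : Vec p n, stmt8T f0 ξ * star (stmt8T g ξ)
        = (cst:ℂ) * ((S.card:ℂ) * ((subFinset W).card:ℂ)^2) := by
      have : ∀ ξ : Vec p n, stmt8T f0 ξ * star (stmt8T g ξ)
          = (cst:ℂ) * (if stmt8Phi W ξ = -φ then ((subFinset W).card:ℂ)^2 else 0) := by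
        intro ξ
        rw [hTf0, mul_assoc, Tg_mul_star W y φ g φe hφe hg ξ]
      simp only [this]
      rw [← Finset.mul_sum, ← Finset.sum_filter, ← hS, Finset.sum_const, nsmul_eq_mul]
    rw [hnum]
    have hcast : ((cst:ℂ) * ((S.card:ℂ) * ((subFinset W).card:ℂ)^2)) / (p:ℂ)^(2*n)
        = (((cst * ((S.card:ℝ) * ((subFinset W).card:ℝ)^2) / (p:ℝ)^(2*n) : ℝ)) : ℂ) := by
      push_cast
      ring
    rw [hcast, Complex.norm_real, Real.norm_of_nonneg (by positivity)]
    rw [hScard, hcW]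
    have hcst' : cst = (p:ℝ)^(-(d:ℝ)/4) * (p:ℝ)^((d:ℕ):ℝ) := by
      rw [hcstdef, ← Real.rpow_add hp0]
      congr 1
      push_cast
      ring
    rw [hcst', Real.rpow_natCast]
    have hpow2 : (p:ℝ)^d * (p:ℝ)^d * ((p:ℝ)^m)^2 = (p:ℝ)^(2*n) := by
      rw [← pow_mul, ← pow_add, ← pow_add]
      congr 1
      omega
    rw [mul_assoc, ← mul_assoc ((p:ℝ)^d), hpow2]
    rw [mul_div_assoc, div_self (by positivity), mul_one]
  -- conclusion
  have hgreat : IsGreatest {r : ℝ | ∃ f : Vec p n → ℂ, U2 f ≤ 1 ∧ r = ‖inprod f g‖}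
      ((p:ℝ)^(-(d:ℝ)/4)) := by
    constructor
    · exact ⟨f0, le_of_eq hU2f0, hip.symm⟩
    · rintro r ⟨f, hf, rfl⟩
      refine (hub f).trans ?_
      have := mul_le_of_le_one_right (Real.rpow_nonneg hp0.le (-(d:ℝ)/4)) hf
      simpa using this
  rw [U2dual]
  exact hgreat.csSup_eq
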